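/- Let I be a homogeneous ideal in S = K[x_1,…,x_n,z], with the graded reverse lexicographic order where z is the smallest variable, such that z is a regular element on S/I. Then the initial ideal in(I) is generated by monomials not divisible by z. -/

import Mathlib

open MvPolynomial
open scoped MonomialOrder

noncomputable section
namespace Paper

variable {σ K : Type*} [Field K]

/-- The leading exponent (multidegree) of a polynomial w.r.t. a monomial order. -/
def mdeg (m : MonomialOrder σ) (f : MvPolynomial σ K) : σ →₀ ℕ :=
  m.toSyn.symm (f.support.sup fun α => m.toSyn α)

/-- The initial ideal of `I` w.r.t. the monomial order `m`. -/
def initialIdeal (m : MonomialOrder σ) (I : Ideal (MvPolynomial σ K)) :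
    Ideal (MvPolynomial σ K) :=
  Ideal.span ((fun f => (monomial (mdeg m f) (1 : K))) '' {f | f ∈ I ∧ f ≠ 0})

/-- `α` is a standard monomial of `I`: the monomial `x^α` is not in the initial ideal. -/
def IsStdMonomial (m : MonomialOrder σ) (I : Ideal (MvPolynomial σ K)) (α : σ →₀ ℕ) : Prop :=
  (monomial α (1 : K)) ∉ initialIdeal m I

/-- `G` is a Gröbner basis of `I` w.r.t. `m`. -/
def IsGroebnerBasis (m : MonomialOrder σ) (I : Ideal (MvPolynomial σ K))
    (G : Set (MvPolynomial σ K)) : Prop :=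
  (∀ g ∈ G, g ∈ I ∧ g ≠ 0) ∧
  initialIdeal m I = Ideal.span ((fun f => (monomial (mdeg m f) (1 : K))) '' G)

/-- An ideal is homogeneous if it is generated by homogeneous polynomials. -/
def IsHomogeneousIdeal (I : Ideal (MvPolynomial σ K)) : Prop :=
  ∃ S : Set (MvPolynomial σ K), (∀ f ∈ S, ∃ k, f.IsHomogeneous k) ∧ I = Ideal.span S

/-- The graded reverse lexicographic order on `Fin N →₀ ℕ`, with
`x_0 > x_1 > ⋯ > x_{N-1}`: compare total degrees first; for equal total degrees,
`α ≺ β` iff the last coordinate in which they differ is larger in `α`. -/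
def IsGrevlex {N : ℕ} (m : MonomialOrder (Fin N)) : Prop :=
  ∀ α β : Fin N →₀ ℕ, (α ≺[m] β) ↔
    (α.degree < β.degree ∨
      (α.degree = β.degree ∧ ∃ j, β j < α j ∧ ∀ k, j < k → α k = β k))

/-- A family of polynomials is generic (over the subfield `F`) if each member is
homogeneous of the prescribed degree and the collection of all of their coefficients
is algebraically independent over `F`. -/
def IsGenericFamily (F : Subfield K) {ι : Type*} (d : ι → ℕ)
    (f : ι → MvPolynomial σ K) : Prop :=
  (∀ i, (f i).IsHomogeneous (d i)) ∧
  AlgebraicIndependent F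
    (fun p : (Σ i : ι, {α : σ →₀ ℕ // α.degree = d i}) => coeff p.2.1 (f p.1))

/-- A monomial ideal property: `J` is almost reverse lexicographic if for every minimal
monomial generator `x^α` of `J`, every monomial of the same degree which is larger
in the order `m` also belongs to `J`. -/
def IsAlmostRevLex (m : MonomialOrder σ) (J : Ideal (MvPolynomial σ K)) : Prop :=
  ∀ α : σ →₀ ℕ, (monomial α (1 : K)) ∈ J →
    (∀ β, β ≤ α → β ≠ α → (monomial β (1 : K)) ∉ J) →
    ∀ γ : σ →₀ ℕ, γ.degree = α.degree → (α ≺[m] γ) → (monomial γ (1 : K)) ∈ J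

/-- The map `K[x_1,…,x_n,z] → K[x_1,…,x_n]` sending `z` to `0`. -/
def projZ (n : ℕ) (K : Type*) [Field K] :
    MvPolynomial (Fin (n+1)) K →ₐ[K] MvPolynomial (Fin n) K :=
  MvPolynomial.aeval (Fin.lastCases (motive := fun _ => MvPolynomial (Fin n) K) 0 X)

/-- Embedding of exponents from `n` variables into `n+1` variables. -/
def emb (n : ℕ) : (Fin n →₀ ℕ) → (Fin (n+1) →₀ ℕ) :=
  Finsupp.mapDomain Fin.castSucc



-- ### Auxiliary lemmas

section Aux

variable {m : MonomialOrder σ}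

lemma le_mdeg {f : MvPolynomial σ K} {α : σ →₀ ℕ} (h : α ∈ f.support) :
    m.toSyn α ≤ m.toSyn (mdeg m f) := by
  rw [mdeg, AddEquiv.apply_symm_apply]
  exact Finset.le_sup h

lemma mdeg_mem_support {f : MvPolynomial σ K} (hf : f ≠ 0) : mdeg m f ∈ f.support := by
  obtain ⟨a, ha, h⟩ := Finset.exists_mem_eq_sup f.support
    (MvPolynomial.support_nonempty.mpr hf) (fun α => m.toSyn α)
  rw [mdeg, h, AddEquiv.symm_apply_apply]
  exact ha

lemma mdeg_X_mul {i : σ} {h : MvPolynomial σ K} (hh : h ≠ 0) :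
    mdeg m (X i * h) = Finsupp.single i 1 + mdeg m h := by
  have hXh : X i * h ≠ 0 := mul_ne_zero (X_ne_zero i) hh
  have h1 : mdeg m (X i * h) ∈ (X i * h).support := mdeg_mem_support hXh
  rw [support_X_mul] at h1
  obtain ⟨β, hβ, hβeq⟩ := Finset.mem_map.mp h1
  have h2 : Finsupp.single i 1 + mdeg m h ∈ (X i * h).support := by
    rw [support_X_mul, Finset.mem_map]
    exact ⟨mdeg m h, mdeg_mem_support hh, rfl⟩
  have le1 := le_mdeg (m := m) h2
  have le2 : m.toSyn (mdeg m (X i * h)) ≤ m.toSyn (Finsupp.single i 1 + mdeg m h) := by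
    rw [← hβeq]
    simp only [addLeftEmbedding_apply, map_add]
    exact add_le_add_right (le_mdeg hβ) _
  exact m.toSyn.injective (le_antisymm le2 le1)

lemma degree_add' (a b : σ →₀ ℕ) : (a + b).degree = a.degree + b.degree := by
  simp only [Finsupp.degree_eq_weight_one, map_add]

lemma degree_single' (i : σ) (r : ℕ) : (Finsupp.single i r).degree = r := by
  classical
  rcases eq_or_ne r 0 with rfl | hr
  · simp [Finsupp.degree]
  · rw [Finsupp.degree_apply, Finsupp.support_single_ne_zero _ hr, Finset.sum_singleton,
      Finsupp.single_eq_same]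

attribute [local instance] MvPolynomial.gradedAlgebra in
lemma homogeneousComponent_mem_ideal {I : Ideal (MvPolynomial σ K)}
    (hI : IsHomogeneousIdeal I) {f : MvPolynomial σ K} (hf : f ∈ I) (d : ℕ) :
    homogeneousComponent d f ∈ I := by
  obtain ⟨S, hS, rfl⟩ := hI
  have h : (Ideal.span S).IsHomogeneous (homogeneousSubmodule σ K) :=
    Ideal.homogeneous_span _ _ (fun x hx => (hS x hx).imp fun k hk =>
      (mem_homogeneousSubmodule k x).mpr hk)
  have := h d hf
  rwa [show ((DirectSum.decompose (homogeneousSubmodule σ K) f d : homogeneousSubmodule σ K d) : MvPolynomial σ K) = homogeneousComponent d f from decomposition.decompose'_apply f d] at this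

lemma mem_support_homogeneousComponent {f : MvPolynomial σ K} {d : ℕ} {α : σ →₀ ℕ} :
    α ∈ (homogeneousComponent d f).support ↔ α.degree = d ∧ α ∈ f.support := by
  classical
  simp only [mem_support_iff, coeff_homogeneousComponent]
  split_ifs with h
  · simp [h]
  · simp [h]

/-- The key induction: for a "homogeneous" element `f` of `I`, we can strip off
all factors of `z = X (Fin.last n)` from its leading monomial. -/
lemma key {n : ℕ} {m : MonomialOrder (Fin (n+1))} (hm : IsGrevlex m)
    {I : Ideal (MvPolynomial (Fin (n+1)) K)}
    (hreg : ∀ f : MvPolynomial (Fin (n+1)) K, (X (Fin.last n)) * f ∈ I → f ∈ I) :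
    ∀ k : ℕ, ∀ f ∈ I, f ≠ 0 →
      (∀ α ∈ f.support, α.degree = (mdeg m f).degree) →
      (mdeg m f) (Fin.last n) = k →
      ∃ g ∈ I, g ≠ 0 ∧ (mdeg m g) (Fin.last n) = 0 ∧
        mdeg m f = mdeg m g + Finsupp.single (Fin.last n) k := by
  intro k
  induction k with
  | zero =>
    intro f hfI hf0 _ hk
    exact ⟨f, hfI, hf0, hk, by simp⟩
  | succ k ih =>
    intro f hfI hf0 hhom hk
    have hdvd : ∀ α ∈ f.support, α (Fin.last n) ≠ 0 := by
      intro α hα h0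
      have h1 : mdeg m f ≺[m] α := by
        rw [hm]
        right
        refine ⟨(hhom α hα).symm, Fin.last n, ?_, ?_⟩
        · rw [h0, hk]; exact Nat.succ_pos k
        · intro j hj
          exact absurd hj (not_lt.mpr (Fin.le_last j))
      exact lt_irrefl _ (lt_of_lt_of_le h1 (le_mdeg hα))
    classical
    set e : Fin (n+1) →₀ ℕ := Finsupp.single (Fin.last n) 1 with he
    have hmod : MvPolynomial.modMonomial f e = 0 := by
      ext α
      rw [coeff_zero]
      by_cases hle : e ≤ α
      · exact MvPolynomial.coeff_modMonomial_of_le f hle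
      · rw [MvPolynomial.coeff_modMonomial_of_not_le f hle]
        by_contra hc
        apply hle
        rw [he, Finsupp.single_le_iff, Nat.one_le_iff_ne_zero]
        exact hdvd α (mem_support_iff.mpr hc)
    set h : MvPolynomial (Fin (n+1)) K := MvPolynomial.divMonomial f e with hh
    have hfeq : X (Fin.last n) * h = f := by
      have := MvPolynomial.modMonomial_add_divMonomial_single f (Fin.last n)
      rw [← he, hmod, zero_add] at this
      exact this
    have hhI : h ∈ I := hreg h (by rw [hfeq]; exact hfI)
    have hh0 : h ≠ 0 := by
      intro hc
      rw [hc, mul_zero] at hfeq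
      exact hf0 hfeq.symm
    have hmdeg : mdeg m f = e + mdeg m h := by
      rw [← hfeq]; exact mdeg_X_mul hh0
    have hsupp : ∀ β ∈ h.support, e + β ∈ f.support := by
      intro β hβ
      rw [← hfeq, support_X_mul, Finset.mem_map]
      exact ⟨β, hβ, rfl⟩
    have hhomh : ∀ β ∈ h.support, β.degree = (mdeg m h).degree := by
      intro β hβ
      have := hhom (e + β) (hsupp β hβ)
      rw [hmdeg, degree_add', degree_add'] at this
      exact Nat.add_left_cancel this
    have hkh : (mdeg m h) (Fin.last n) = k := by
      have := hk
      rw [hmdeg] at this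
      rw [Finsupp.add_apply, he, Finsupp.single_eq_same] at this
      omega
    obtain ⟨g, hgI, hg0, hglast, hgeq⟩ := ih h hhI hh0 hhomh hkh
    refine ⟨g, hgI, hg0, hglast, ?_⟩
    rw [hmdeg, hgeq, he]
    rw [← add_assoc, add_comm (Finsupp.single (Fin.last n) 1) (mdeg m g), add_assoc,
      ← Finsupp.single_add, Nat.add_comm 1 k]

end Aux

/-- If `I ⊂ K[x_1,…,x_n,z]` is homogeneous and `z` (the smallest variable for
grevlex) is regular on `S/I`, then the initial ideal of `I` is generated by
monomials not divisible by `z`. -/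
theorem initialIdeal_generated_by_z_free_monomials
    {K : Type*} [Field K] (n : ℕ)
    (m : MonomialOrder (Fin (n+1))) (hm : IsGrevlex m)
    (I : Ideal (MvPolynomial (Fin (n+1)) K)) (hI : IsHomogeneousIdeal I)
    (hreg : ∀ f : MvPolynomial (Fin (n+1)) K, (X (Fin.last n)) * f ∈ I → f ∈ I) :
    ∃ T : Set (Fin (n+1) →₀ ℕ), (∀ γ ∈ T, γ (Fin.last n) = 0) ∧
      initialIdeal m I = Ideal.span ((fun γ => (monomial γ (1 : K))) '' T) := by
  classical
  refine ⟨{γ | γ (Fin.last n) = 0 ∧ (monomial γ (1 : K)) ∈ initialIdeal m I},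
    fun γ hγ => hγ.1, le_antisymm ?_ ?_⟩
  · rw [initialIdeal, Ideal.span_le]
    rintro _ ⟨f, ⟨hfI, hf0⟩, rfl⟩
    set d := (mdeg m f).degree with hd
    set g : MvPolynomial (Fin (n+1)) K := homogeneousComponent d f with hg
    have hmemg : mdeg m f ∈ g.support :=
      mem_support_homogeneousComponent.mpr ⟨rfl, mdeg_mem_support hf0⟩
    have hg0 : g ≠ 0 := by
      intro hc
      rw [hc] at hmemg
      simp at hmemg
    have hgI : g ∈ I := homogeneousComponent_mem_ideal hI hfI d
    have hsub : g.support ⊆ f.support := fun α hα =>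
      (mem_support_homogeneousComponent.mp hα).2
    have hmdeg : mdeg m g = mdeg m f := by
      apply m.toSyn.injective
      exact le_antisymm (le_mdeg (hsub (mdeg_mem_support hg0))) (le_mdeg hmemg)
    have hhom : ∀ α ∈ g.support, α.degree = (mdeg m g).degree := by
      intro α hα
      rw [hmdeg, ← hd]
      exact (mem_support_homogeneousComponent.mp hα).1
    obtain ⟨g₀, hg₀I, hg₀0, hg₀last, heq⟩ :=
      key hm hreg ((mdeg m g) (Fin.last n)) g hgI hg0 hhom rfl
    have hγT : mdeg m g₀ ∈ {γ | γ (Fin.last n) = 0 ∧ (monomial γ (1 : K)) ∈ initialIdeal m I} :=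
      ⟨hg₀last, Ideal.subset_span ⟨g₀, ⟨hg₀I, hg₀0⟩, rfl⟩⟩
    have hmono : monomial (mdeg m f) (1 : K) =
        monomial (mdeg m g₀) 1 *
          monomial (Finsupp.single (Fin.last n) ((mdeg m g) (Fin.last n))) 1 := by
      rw [monomial_mul, one_mul, ← heq, hmdeg]
    show (monomial (mdeg m f)) (1 : K) ∈ _
    rw [hmono]
    exact Ideal.mul_mem_right _ _ (Ideal.subset_span ⟨mdeg m g₀, hγT, rfl⟩)
  · rw [Ideal.span_le]
    rintro _ ⟨γ, hγ, rfl⟩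
    exact hγ.2

end Paper
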